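/- The vertices of the Voronoï region of D_n (the 2n vectors ±e_i and the 2ⁿ vectors (±1/2,…,±1/2)) span over ℤ the dual lattice D_n^#. -/
import Mathlib


open Set Filter MeasureTheory Pointwise

/-- The lattice `Dₙ = {x ∈ ℤⁿ : ∑ xᵢ even}`. -/
def Dlat (n : ℕ) : Set (Fin n → ℝ) :=
  {x | (∀ i, ∃ m : ℤ, x i = (m : ℝ)) ∧ ∃ k : ℤ, ∑ i, x i = 2 * (k : ℝ)}

/-- The Voronoï region of `Dₙ`. -/
def VorDn (n : ℕ) : Set (Fin n → ℝ) :=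
  {z | ∀ x ∈ Dlat n, ∑ i, (z i) ^ 2 ≤ ∑ i, (z i - x i) ^ 2}

/-- The norm `‖x‖ = max_{i ≠ j} (|xᵢ| + |xⱼ|)` (whose unit ball is the Voronoï
region of `Dₙ`). -/
noncomputable def DnNorm (n : ℕ) (x : Fin n → ℝ) : ℝ :=
  sSup {r : ℝ | ∃ i j, i ≠ j ∧ r = |x i| + |x j|}

/-- The vertex set of the Voronoï region of `Dₙ`: the `2n` vectors `±eᵢ` and the
`2ⁿ` vectors `(±1/2, …, ±1/2)`. -/
def VPDn (n : ℕ) : Set (Fin n → ℝ) :=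
  {v | ∃ i, v = Pi.single i (1 : ℝ) ∨ v = -Pi.single i (1 : ℝ)} ∪
    {v | ∀ i, v i = 1 / 2 ∨ v i = -(1 / 2)}

lemma sum_int_aux {n : ℕ} (f : Fin n → ℝ) (h : ∀ i, ∃ m : ℤ, f i = (m : ℝ)) :
    ∃ m : ℤ, ∑ i, f i = (m : ℝ) := by
  choose g hg using h
  refine ⟨∑ i, g i, ?_⟩
  rw [Finset.sum_congr rfl fun i _ => hg i]
  push_cast
  ring

/-- The dual of `Dₙ` as a ℤ-submodule. -/
def dualDn (n : ℕ) : Submodule ℤ (Fin n → ℝ) where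
  carrier := {y | ∀ x ∈ Dlat n, ∃ m : ℤ, ∑ i, x i * y i = (m : ℝ)}
  add_mem' := by
    intro a b ha hb x hx
    obtain ⟨m, hm⟩ := ha x hx
    obtain ⟨k, hk⟩ := hb x hx
    refine ⟨m + k, ?_⟩
    push_cast
    rw [← hm, ← hk, ← Finset.sum_add_distrib]
    exact Finset.sum_congr rfl fun i _ => by simp [Pi.add_apply]; ring
  zero_mem' := by
    intro x hx
    exact ⟨0, by simp⟩
  smul_mem' := by
    intro c a ha x hx
    obtain ⟨m, hm⟩ := ha x hx
    refine ⟨c * m, ?_⟩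
    push_cast
    rw [← hm, Finset.mul_sum]
    exact Finset.sum_congr rfl fun i _ => by
      simp [Pi.smul_apply, zsmul_eq_mul]; ring

lemma int_vec_mem_span {n : ℕ} (z : Fin n → ℝ) (hz : ∀ i, ∃ m : ℤ, z i = (m : ℝ)) :
    z ∈ Submodule.span ℤ (VPDn n) := by
  choose c hc using hz
  have hrepr : z = ∑ i, (c i) • Pi.single i (1 : ℝ) := by
    funext j
    rw [Finset.sum_apply]
    rw [Finset.sum_eq_single j]
    · simp [hc j]
    · intro i _ hij
      simp [Pi.single_apply, hij]
    · simp
  rw [hrepr]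
  refine Submodule.sum_mem _ fun i _ => Submodule.smul_mem _ _ ?_
  exact Submodule.subset_span (Or.inl ⟨i, Or.inl rfl⟩)

theorem vertices_span_dual_Dn (n : ℕ) (hn : 4 ≤ n) :
    (Submodule.span ℤ (VPDn n) : Set (Fin n → ℝ))
      = {y | ∀ x ∈ Dlat n, ∃ m : ℤ, ∑ i, x i * y i = (m : ℝ)} := by
  apply Set.Subset.antisymm
  · -- span ⊆ dual
    have h : Submodule.span ℤ (VPDn n) ≤ dualDn n := by
      rw [Submodule.span_le]
      rintro v (⟨i, hv | hv⟩ | hv)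
      · -- v = e_i
        intro x hx
        obtain ⟨m, hm⟩ := hx.1 i
        refine ⟨m, ?_⟩
        subst hv
        rw [Finset.sum_eq_single i]
        · simp [hm]
        · intro j _ hij; simp [Pi.single_apply, hij]
        · simp
      · -- v = -e_i
        intro x hx
        obtain ⟨m, hm⟩ := hx.1 i
        refine ⟨-m, ?_⟩
        subst hv
        rw [Finset.sum_eq_single i]
        · simp [hm]
        · intro j _ hij; simp [Pi.single_apply, hij]
        · simp
      · -- v = (±1/2, …, ±1/2)
        intro x hx
        obtain ⟨hx1, k, hk⟩ := hx
        obtain ⟨M, hM⟩ := sum_int_aux (fun i => x i * (v i - 1/2)) (by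
          intro i
          obtain ⟨m, hm⟩ := hx1 i
          rcases hv i with h | h
          · exact ⟨0, by simp [h]⟩
          · refine ⟨-m, ?_⟩
            show x i * (v i - 1/2) = ((-m : ℤ) : ℝ)
            rw [h, hm]; push_cast; ring)
        refine ⟨M + k, ?_⟩
        have : ∑ i, x i * v i = (∑ i, x i * (v i - 1/2)) + (1/2) * ∑ i, x i := by
          rw [Finset.mul_sum, ← Finset.sum_add_distrib]
          exact Finset.sum_congr rfl fun i _ => by ring
        rw [this, hM, hk]
        push_cast
        ring
    exact fun y hy => h hy
  · -- dual ⊆ span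
    intro y hy
    simp only [Set.mem_setOf_eq] at hy
    have hn0 : 0 < n := by omega
    -- 2 y i ∈ ℤ
    have h2 : ∀ i : Fin n, ∃ a : ℤ, 2 * y i = (a : ℝ) := by
      intro i
      have hx : (fun j => if j = i then (2:ℝ) else 0) ∈ Dlat n := by
        constructor
        · intro j
          by_cases h : j = i
          · exact ⟨2, by simp [h]⟩
          · exact ⟨0, by simp [h]⟩
        · refine ⟨1, ?_⟩
          rw [Finset.sum_ite_eq' Finset.univ i (fun _ => (2:ℝ))]
          simp
      obtain ⟨a, ha⟩ := hy _ hx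
      refine ⟨a, ?_⟩
      rw [← ha, Finset.sum_eq_single i] <;> simp_all
    -- y i - y i0 ∈ ℤ
    set i0 : Fin n := ⟨0, hn0⟩
    have hd : ∀ i : Fin n, ∃ b : ℤ, y i0 - y i = (b : ℝ) := by
      intro i
      have hx : ((Pi.single i0 (1:ℝ) - Pi.single i (1:ℝ) : Fin n → ℝ)) ∈ Dlat n := by
        constructor
        · intro j
          by_cases h1 : j = i0 <;> by_cases h2 : j = i
          · exact ⟨0, by simp [h1, ← h2]⟩
          · exact ⟨1, by subst h1; simp [Pi.single_apply, Ne.symm h2]⟩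
          · exact ⟨-1, by subst h2; simp [Pi.single_apply, Ne.symm h1]⟩
          · exact ⟨0, by simp [Pi.single_apply, h1, h2]⟩
        · refine ⟨0, ?_⟩
          simp [Finset.sum_sub_distrib]
      obtain ⟨b, hb⟩ := hy _ hx
      refine ⟨b, ?_⟩
      rw [← hb]
      rw [Finset.sum_congr rfl (fun j _ => by
        show ((Pi.single i0 (1:ℝ) - Pi.single i (1:ℝ) : Fin n → ℝ)) j * y j
          = (Pi.single i0 (1:ℝ) : Fin n → ℝ) j * y j - (Pi.single i (1:ℝ) : Fin n → ℝ) j * y j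
        simp [sub_mul])]
      rw [Finset.sum_sub_distrib]
      have hs : ∀ (l : Fin n), ∑ j, (Pi.single l (1:ℝ) : Fin n → ℝ) j * y j = y l := by
        intro l
        rw [Finset.sum_eq_single l]
        · simp
        · intro j _ hj; simp [Pi.single_apply, hj]
        · simp
      rw [hs, hs]
    obtain ⟨a, ha⟩ := h2 i0
    rcases Int.even_or_odd a with ⟨b, hb⟩ | ⟨b, hb⟩
    · -- y i0 ∈ ℤ, so all y i ∈ ℤ
      apply int_vec_mem_span
      intro i
      obtain ⟨d, hd'⟩ := hd i
      refine ⟨b - d, ?_⟩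
      have : y i0 = (b : ℝ) := by
        have := ha
        rw [hb] at this
        push_cast at this
        linarith
      push_cast
      linarith
    · -- y = h + integer vector with h = (1/2,…,1/2)
      have hhalf : (fun _ : Fin n => (1:ℝ)/2) ∈ VPDn n := Or.inr fun i => Or.inl rfl
      have hz : ∀ i, ∃ m : ℤ, (y - fun _ => (1:ℝ)/2 : Fin n → ℝ) i = (m : ℝ) := by
        intro i
        obtain ⟨d, hd'⟩ := hd i
        refine ⟨b - d, ?_⟩
        have : y i0 = (b : ℝ) + 1/2 := by
          have := ha
          rw [hb] at this
          push_cast at this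
          linarith
        push_cast
        simp only [Pi.sub_apply]
        linarith
      have h1 : ((y - fun _ => (1:ℝ)/2 : Fin n → ℝ)) ∈ Submodule.span ℤ (VPDn n) :=
        int_vec_mem_span _ hz
      have h2' : (fun _ : Fin n => (1:ℝ)/2) ∈ Submodule.span ℤ (VPDn n) :=
        Submodule.subset_span hhalf
      have := Submodule.add_mem _ h1 h2'
      simpa using this
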